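/- Let n ≥ 0 and 0 ≤ j ≤ n be integers. The 2-core of the partition 2^j ⊔ 1^{2n−2j} (j parts equal to 2 and 2n−2j parts equal to 1) is the empty partition, and its 2-quotient (λ1, λ2) equals (1^{n−j/2}, 1^{j/2}) if j is even and (1^{(j−1)/2}, 1^{n−(j−1)/2}) if j is odd. Consequently, the map j ↦ (λ1, λ2) is a bijection from {0, 1, …, n} onto the set of bipartitions of size n both of whose components are column partitions (of the form 1^a). -/

import Mathlib

namespace GUnBranching

/-- A partition, given by its (0-indexed) weakly decreasing, eventually zero
sequence of parts: `part k` is the (k+1)-st part `λ_{k+1}`. -/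
structure Partition where
  part : ℕ → ℕ
  antitone : ∀ i j : ℕ, i ≤ j → part j ≤ part i
  eventually_zero : ∃ N : ℕ, ∀ n : ℕ, N ≤ n → part n = 0

namespace Partition

/-- The set of boxes (row, column) (0-indexed) of the Young diagram of a partition. -/
def boxSet (p : Partition) : Set (ℕ × ℕ) := {b | b.2 < p.part b.1}

/-- The size `|λ|` of a partition: the number of boxes of its Young diagram. -/
noncomputable def size (p : Partition) : ℕ := p.boxSet.ncard

/-- The β-set `β(λ) = {λ_k - k + 1 : k ≥ 1}` (0-indexed: `{part k - k : k ∈ ℕ}`). -/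
def betaSet (p : Partition) : Set ℤ := {z | ∃ k : ℕ, z = (p.part k : ℤ) - k}

/-- The charged β-set `{λ_k + s - k + 1 : k ≥ 1}` of `(λ, s)`. -/
def chargedBetaSet (p : Partition) (s : ℤ) : Set ℤ :=
  {z | ∃ k : ℕ, z = (p.part k : ℤ) + s - k}

/-- The number of (nonzero) parts of a partition. -/
noncomputable def length (p : Partition) : ℕ := {k : ℕ | p.part k ≠ 0}.ncard

end Partition

/-- The empty partition `∅`. -/
def emptyPartition : Partition :=
  ⟨fun _ => 0, fun _ _ _ => le_rfl, ⟨0, fun _ _ => rfl⟩⟩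

/-- The partition `3^a 2^b 1^c` (a parts equal to 3, b parts equal to 2, c parts equal to 1). -/
def threeTwoOne (a b c : ℕ) : Partition where
  part k := if k < a then 3 else if k < a + b then 2 else if k < a + b + c then 1 else 0
  antitone i j h := by (try dsimp only); split_ifs <;> omega
  eventually_zero := ⟨a + b + c, fun n hn => by (try dsimp only); split_ifs <;> omega⟩

/-- The column partition `1^m`. -/
def column (m : ℕ) : Partition := threeTwoOne 0 0 m

/-- The staircase partition `Δ_t = (t, t-1, …, 2, 1)`. -/
def staircase (t : ℕ) : Partition where
  part k := t - k
  antitone i j h := Nat.sub_le_sub_left h t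
  eventually_zero := ⟨t, fun n hn => Nat.sub_eq_zero_of_le hn⟩

/-- The partition `Δ_t ⊔ 1^r` (staircase with a column of `r` extra parts equal to 1). -/
def staircaseColumn (t r : ℕ) : Partition where
  part k := if k < t then t - k else if k < t + r then 1 else 0
  antitone i j h := by (try dsimp only); split_ifs <;> omega
  eventually_zero := ⟨t + r, fun n hn => by (try dsimp only); split_ifs <;> omega⟩

/-- `p ⊔ 1^r` : append `r` extra parts equal to 1 to the partition `p`. -/
noncomputable def appendOnes (p : Partition) (r : ℕ) : Partition where
  part k := max (p.part k) (if k < p.length + r then 1 else 0)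
  antitone i j h := max_le_max (p.antitone i j h) (by split_ifs <;> omega)
  eventually_zero := by
    obtain ⟨N, hN⟩ := p.eventually_zero
    refine ⟨max N (p.length + r), fun n hn => ?_⟩
    have h1 : p.part n = 0 := hN n (le_trans (le_max_left _ _) hn)
    have h2 : ¬ n < p.length + r := by
      have := le_trans (le_max_right N (p.length + r)) hn
      omega
    simp [h1, h2]

/-- `mu` is obtained from `lam` by removing one rim `e`-hook: on β-sets, a bead `x`
with an empty spot at `x - e` is moved to `x - e`. -/
def RemoveHook (e : ℕ) (lam mu : Partition) : Prop :=
  ∃ x : ℤ, x ∈ lam.betaSet ∧ (x - e) ∉ lam.betaSet ∧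
    mu.betaSet = insert (x - e) (lam.betaSet \ {x})

/-- A partition is an `e`-core if no rim `e`-hook can be removed from it. -/
def IsECore (e : ℕ) (p : Partition) : Prop := ∀ mu : Partition, ¬ RemoveHook e p mu

/-- `core` is the `e`-core of `lam`: it is obtained from `lam` by repeatedly removing
rim `e`-hooks, and no further rim `e`-hook can be removed. -/
def HasECore (e : ℕ) (lam core : Partition) : Prop :=
  Relation.ReflTransGen (RemoveHook e) lam core ∧ IsECore e core

/-- `lam` and `mu` have the same `e`-core. -/
def SameECore (e : ℕ) (lam mu : Partition) : Prop :=
  ∃ core : Partition, HasECore e lam core ∧ HasECore e mu core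

/-- `(q1, q2)` is the 2-quotient of `lam`: the odd (resp. even) β-numbers of `lam`,
transformed by `v ↦ (v+1)/2` (resp. `v ↦ v/2`), form the β-set of `q1` (resp. `q2`)
for a suitable charge. -/
def IsTwoQuotient (lam q1 q2 : Partition) : Prop :=
  (∃ c : ℤ, q1.chargedBetaSet c = {z : ℤ | 2 * z - 1 ∈ lam.betaSet}) ∧
  (∃ c : ℤ, q2.chargedBetaSet c = {z : ℤ | 2 * z ∈ lam.betaSet})

/-- The charge `s_t`: `(-(t+1+e)/2, t/2)` for even `t`, `(-(t+1)/2, (t+e)/2)` for odd `t`. -/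
def tauCharge (e t : ℕ) : ℤ × ℤ :=
  if t % 2 = 0 then (-(((t : ℤ) + 1 + e) / 2), (t : ℤ) / 2)
  else (-(((t : ℤ) + 1) / 2), ((t : ℤ) + e) / 2)

/-- `bp` is the twisted 2-quotient `τ(lam)` of `lam`, a partition with 2-core `Δ_t`:
it is the 2-quotient for even `t` and the swapped 2-quotient for odd `t`; the
corresponding charge is `tauCharge e t`. -/
def IsTwistedQuotient (t : ℕ) (lam : Partition) (bp : Partition × Partition) : Prop :=
  HasECore 2 lam (staircase t) ∧
  (if t % 2 = 0 then IsTwoQuotient lam bp.1 bp.2 else IsTwoQuotient lam bp.2 bp.1)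

/-- The abacus of a charged bipartition: positions are (column, row) where row
`0 : Fin 2` is the bottom row (first component, charge `s.1`) and row `1 : Fin 2`
the top row (second component, charge `s.2`). -/
def abacus (bp : Partition × Partition) (s : ℤ × ℤ) : Set (ℤ × Fin 2) :=
  {b | b.1 ∈ (if b.2 = (0 : Fin 2) then bp.1.chargedBetaSet s.1 else bp.2.chargedBetaSet s.2)}

/-- `P` is an `e`-period of the abacus `A`: beads `(x, r 0), (x-1, r 1), …, (x-e+1, r (e-1))`
of `A` where `x` is the largest column containing a bead of `A`, `r i = 0` (bottom row)
whenever `(x - i, bottom)` is a bead of `A` (for `i < e-1`), and once in the bottom row the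
period stays in the bottom row. -/
def IsEPeriodOf (e : ℕ) (A P : Set (ℤ × Fin 2)) : Prop :=
  ∃ (x : ℤ) (r : ℕ → Fin 2),
    P = {b | ∃ i : ℕ, i < e ∧ b = ((x - i : ℤ), r i)} ∧
    (∀ i : ℕ, i < e → ((x - i : ℤ), r i) ∈ A) ∧
    (∀ b ∈ A, b.1 ≤ x) ∧
    (∀ i : ℕ, i + 1 < e → ((x - i : ℤ), (0 : Fin 2)) ∈ A → r i = 0) ∧
    (∀ i : ℕ, i + 1 < e → r i = 0 → r (i + 1) = 0)

/-- `P 0, P 1, P 2, …` is the sequence of `e`-periods of `A`: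
each `P k` is the `e`-period of `A` minus the previous periods. -/
def IsPeriodSeq (e : ℕ) (A : Set (ℤ × Fin 2)) (P : ℕ → Set (ℤ × Fin 2)) : Prop :=
  ∀ k : ℕ, IsEPeriodOf e (A \ ⋃ i ∈ Finset.range k, P i) (P k)

/-- The abacus `A` is totally `e`-periodic: the `k`-th `e`-period exists for every `k`. -/
def TotallyPeriodic (e : ℕ) (A : Set (ℤ × Fin 2)) : Prop :=
  ∃ P : ℕ → Set (ℤ × Fin 2), IsPeriodSeq e A P

/-- `P` is the `(k+1)`-st `e`-period of `A` (so `k = 0` gives the first `e`-period). -/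
def IsKthPeriod (e : ℕ) (A : Set (ℤ × Fin 2)) (k : ℕ) (P : Set (ℤ × Fin 2)) : Prop :=
  ∃ Q : ℕ → Set (ℤ × Fin 2),
    (∀ i : ℕ, i ≤ k → IsEPeriodOf e (A \ ⋃ j ∈ Finset.range i, Q j) (Q i)) ∧ Q k = P

/-- Shift a set of abacus positions one step to the right. -/
def shiftRight (P : Set (ℤ × Fin 2)) : Set (ℤ × Fin 2) := {b | (b.1 - 1, b.2) ∈ P}

/-- Edge of the `sl_∞`-crystal moving the `(k+1)`-st `e`-period one step to the right:
the shifted period must again be the `(k+1)`-st `e`-period of the resulting abacus. -/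
def SlInfEdgeAt (e : ℕ) (s : ℤ × ℤ) (k : ℕ) (lam mu : Partition × Partition) : Prop :=
  TotallyPeriodic e (abacus lam s) ∧ TotallyPeriodic e (abacus mu s) ∧
  ∃ P : Set (ℤ × Fin 2),
    IsKthPeriod e (abacus lam s) k P ∧
    abacus mu s = (abacus lam s \ P) ∪ shiftRight P ∧
    IsKthPeriod e (abacus mu s) k (shiftRight P)

/-- Edge of the `sl_∞`-crystal. -/
def SlInfEdge (e : ℕ) (s : ℤ × ℤ) (lam mu : Partition × Partition) : Prop :=
  ∃ k : ℕ, SlInfEdgeAt e s k lam mu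

/-- A source vertex of the `sl_∞`-crystal: a vertex (totally `e`-periodic abacus)
with no incoming edge. -/
def IsSlInfSource (e : ℕ) (s : ℤ × ℤ) (bp : Partition × Partition) : Prop :=
  TotallyPeriodic e (abacus bp s) ∧ ∀ lam : Partition × Partition, ¬ SlInfEdge e s lam bp

/-- A box of a bipartition: (component, row, column), all 0-indexed
(component `0 : Fin 2` is the first component `λ¹`). -/
abbrev Box := Fin 2 × ℕ × ℕ

/-- The component of a bipartition indexed by `j : Fin 2`. -/
def comp (bp : Partition × Partition) (j : Fin 2) : Partition :=
  if j = 0 then bp.1 else bp.2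

/-- `b` is a box of the bipartition `bp`. -/
def IsBoxOf (bp : Partition × Partition) (b : Box) : Prop :=
  b.2.2 < (comp bp b.1).part b.2.1

/-- The (charged) content `ct(b) = y - x + s_j` of a box `b = (j, x, y)`. -/
def content (s : ℤ × ℤ) (b : Box) : ℤ :=
  (b.2.2 : ℤ) - (b.2.1 : ℤ) + (if b.1 = 0 then s.1 else s.2)

/-- `b` is an addable box of the bipartition `bp`. -/
def IsAddable (bp : Partition × Partition) (b : Box) : Prop :=
  b.2.2 = (comp bp b.1).part b.2.1 ∧
  (b.2.1 = 0 ∨ (comp bp b.1).part b.2.1 < (comp bp b.1).part (b.2.1 - 1))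

/-- `b` is a removable box of the bipartition `bp`. -/
def IsRemovable (bp : Partition × Partition) (b : Box) : Prop :=
  b.2.2 + 1 = (comp bp b.1).part b.2.1 ∧
  (comp bp b.1).part (b.2.1 + 1) < (comp bp b.1).part b.2.1

/-- The total order on addable/removable boxes: `b ≤ b'` iff `b = b'`, or
`ct(b) < ct(b')`, or the contents are equal, `b` lies in the second component and
`b'` in the first. -/
def boxLE (s : ℤ × ℤ) (b b' : Box) : Prop :=
  b = b' ∨ content s b < content s b' ∨
    (content s b = content s b' ∧ b.1 = 1 ∧ b'.1 = 0)

/-- The set of addable or removable boxes of residue `i` (the letters of the `i`-word). -/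
def IWord (e : ℕ) (s : ℤ × ℤ) (bp : Partition × Partition) (i : ZMod e) : Set Box :=
  {b | (IsAddable bp b ∨ IsRemovable bp b) ∧ ((content s b : ZMod e) = i)}

/-- A removable box of residue `i` surviving the Kashiwara cancellation: reading the
`i`-word in increasing order and cancelling each removable box with a following addable
box (recursively cancelling adjacent removable-addable pairs), `b` is not cancelled.
Equivalently, every final segment of the `i`-word starting at `b` contains strictly
more removable than addable boxes. -/
def SurvivingRemovable (e : ℕ) (s : ℤ × ℤ) (bp : Partition × Partition)
    (i : ZMod e) (b : Box) : Prop :=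
  b ∈ IWord e s bp i ∧ IsRemovable bp b ∧
  ∀ c ∈ IWord e s bp i, boxLE s b c →
    {d : Box | d ∈ IWord e s bp i ∧ IsAddable bp d ∧ boxLE s b d ∧ boxLE s d c}.ncard <
    {d : Box | d ∈ IWord e s bp i ∧ IsRemovable bp d ∧ boxLE s b d ∧ boxLE s d c}.ncard

/-- The good removable `i`-box: the smallest removable `i`-box surviving the
Kashiwara cancellation. -/
def IsGoodRemovable (e : ℕ) (s : ℤ × ℤ) (bp : Partition × Partition)
    (i : ZMod e) (b : Box) : Prop :=
  SurvivingRemovable e s bp i b ∧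
  ∀ b' : Box, SurvivingRemovable e s bp i b' → boxLE s b b'

/-- An addable box of residue `i` surviving the Kashiwara cancellation. -/
def SurvivingAddable (e : ℕ) (s : ℤ × ℤ) (bp : Partition × Partition)
    (i : ZMod e) (b : Box) : Prop :=
  b ∈ IWord e s bp i ∧ IsAddable bp b ∧
  ∀ c ∈ IWord e s bp i, boxLE s c b →
    {d : Box | d ∈ IWord e s bp i ∧ IsRemovable bp d ∧ boxLE s c d ∧ boxLE s d b}.ncard <
    {d : Box | d ∈ IWord e s bp i ∧ IsAddable bp d ∧ boxLE s c d ∧ boxLE s d b}.ncard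

/-- The good addable `i`-box: the largest addable `i`-box surviving the
Kashiwara cancellation. -/
def IsGoodAddable (e : ℕ) (s : ℤ × ℤ) (bp : Partition × Partition)
    (i : ZMod e) (b : Box) : Prop :=
  SurvivingAddable e s bp i b ∧
  ∀ b' : Box, SurvivingAddable e s bp i b' → boxLE s b' b

/-- A source vertex of the `ŝl_e`-crystal: no good removable `i`-box for any residue `i`. -/
def IsSlESource (e : ℕ) (s : ℤ × ℤ) (bp : Partition × Partition) : Prop :=
  ∀ (i : ZMod e) (b : Box), ¬ IsGoodRemovable e s bp i b

/-- `bp'` is obtained from `bp` by adding the box `b`. -/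
def AddBox (bp : Partition × Partition) (b : Box) (bp' : Partition × Partition) : Prop :=
  if b.1 = 0 then
    bp'.2 = bp.2 ∧ bp'.1.part = Function.update bp.1.part b.2.1 (bp.1.part b.2.1 + 1)
  else
    bp'.1 = bp.1 ∧ bp'.2.part = Function.update bp.2.part b.2.1 (bp.2.part b.2.1 + 1)

/-- Dominance order: `Dominates mu la` means `la ⊴ mu`. -/
def Dominates (mu la : Partition) : Prop :=
  ∀ k : ℕ, ∑ i ∈ Finset.range k, la.part i ≤ ∑ i ∈ Finset.range k, mu.part i

lemma part_ext {p q : Partition} (h : p.part = q.part) : p = q := by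
  cases p; cases q; cases h; rfl

lemma tto_part (p q k : ℕ) : (threeTwoOne 0 p q).part k =
    if k < p then 2 else if k < p + q then 1 else 0 := by
  simp only [threeTwoOne]
  split_ifs <;> omega

lemma beta_tto (p q : ℕ) : (threeTwoOne 0 p q).betaSet =
    {z : ℤ | z ≤ 2 ∧ z ≠ 2 - p ∧ z ≠ 1 - p - q} := by
  ext z
  simp only [Partition.betaSet, Set.mem_setOf_eq]
  constructor
  · rintro ⟨k, rfl⟩
    rw [tto_part]
    split_ifs <;> push_cast <;> omega
  · rintro ⟨h1, h2, h3⟩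
    by_cases hz1 : 3 - (p : ℤ) ≤ z
    · refine ⟨(2 - z).toNat, ?_⟩
      rw [tto_part, if_pos (by omega)]
      push_cast; omega
    · by_cases hz2 : 2 - (p : ℤ) - q ≤ z
      · refine ⟨(1 - z).toNat, ?_⟩
        rw [tto_part, if_neg (by omega), if_pos (by omega)]
        push_cast; omega
      · refine ⟨(-z).toNat, ?_⟩
        rw [tto_part, if_neg (by omega), if_neg (by omega)]
        push_cast; omega

lemma hookA (p q : ℕ) :
    RemoveHook 2 (threeTwoOne 0 p (q + 2)) (threeTwoOne 0 p q) := by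
  refine ⟨1 - p - q, ?_, ?_, ?_⟩
  · rw [beta_tto]; constructor
    · omega
    · constructor <;> push_cast <;> omega
  · rw [beta_tto]; simp only [Set.mem_setOf_eq]; push_cast; omega
  · rw [beta_tto, beta_tto]
    ext z
    simp only [Set.mem_insert_iff, Set.mem_diff, Set.mem_setOf_eq,
      Set.mem_singleton_iff]
    push_cast
    omega

lemma hookB (p : ℕ) :
    RemoveHook 2 (threeTwoOne 0 (p + 1) 0) (threeTwoOne 0 p 0) := by
  refine ⟨2 - p, ?_, ?_, ?_⟩
  · rw [beta_tto]; constructor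
    · omega
    · constructor <;> push_cast <;> omega
  · rw [beta_tto]; simp only [Set.mem_setOf_eq]; push_cast; omega
  · rw [beta_tto, beta_tto]
    ext z
    simp only [Set.mem_insert_iff, Set.mem_diff, Set.mem_setOf_eq,
      Set.mem_singleton_iff]
    push_cast
    omega

lemma chainA (p m : ℕ) :
    Relation.ReflTransGen (RemoveHook 2) (threeTwoOne 0 p (2 * m))
      (threeTwoOne 0 p 0) := by
  induction m with
  | zero => exact .refl
  | succ m ih =>
    refine .head ?_ ih
    have h : 2 * (m + 1) = 2 * m + 2 := by ring
    rw [h]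
    exact hookA p (2 * m)

lemma chainB (p : ℕ) :
    Relation.ReflTransGen (RemoveHook 2) (threeTwoOne 0 p 0)
      (threeTwoOne 0 0 0) := by
  induction p with
  | zero => exact .refl
  | succ p ih => exact .head (hookB p) ih

lemma tto_zero : threeTwoOne 0 0 0 = emptyPartition := by
  apply part_ext
  funext k
  rw [tto_part]
  simp [emptyPartition]

lemma empty_beta : emptyPartition.betaSet = {z : ℤ | z ≤ 0} := by
  ext z
  simp only [Partition.betaSet, emptyPartition, Set.mem_setOf_eq]
  constructor
  · rintro ⟨k, rfl⟩; omega
  · intro hz; exact ⟨(-z).toNat, by omega⟩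

lemma core_lemma {n j : ℕ} (hj : j ≤ n) :
    HasECore 2 (threeTwoOne 0 j (2 * n - 2 * j)) emptyPartition := by
  constructor
  · have h : 2 * n - 2 * j = 2 * (n - j) := by omega
    rw [h]
    exact ((chainA j (n - j)).trans (tto_zero ▸ chainB j))
  · rintro mu ⟨x, hx, hx2, -⟩
    rw [empty_beta] at hx hx2
    simp only [Set.mem_setOf_eq] at hx hx2
    omega

lemma col_beta (m : ℕ) :
    (column m).chargedBetaSet 0 = {z : ℤ | z ≤ 1 ∧ z ≠ 1 - m} := by
  ext z
  simp only [Partition.chargedBetaSet, column, Set.mem_setOf_eq]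
  constructor
  · rintro ⟨k, rfl⟩
    rw [tto_part]
    split_ifs <;> push_cast <;> omega
  · rintro ⟨h1, h2⟩
    by_cases hz : 2 - (m : ℤ) ≤ z
    · refine ⟨(1 - z).toNat, ?_⟩
      rw [tto_part, if_neg (by omega), if_pos (by omega)]
      push_cast; omega
    · refine ⟨(-z).toNat, ?_⟩
      rw [tto_part, if_neg (by omega), if_neg (by omega)]
      push_cast; omega

lemma quot_lemma {n j : ℕ} (hj : j ≤ n) :
    IsTwoQuotient (threeTwoOne 0 j (2 * n - 2 * j))
      (if j % 2 = 0 then column (n - j / 2) else column ((j - 1) / 2))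
      (if j % 2 = 0 then column (j / 2) else column (n - (j - 1) / 2)) := by
  constructor
  · refine ⟨0, ?_⟩
    split_ifs with h <;>
    · rw [col_beta, beta_tto]
      ext z
      simp only [Set.mem_setOf_eq]
      push_cast
      omega
  · refine ⟨0, ?_⟩
    split_ifs with h <;>
    · rw [col_beta, beta_tto]
      ext z
      simp only [Set.mem_setOf_eq]
      push_cast
      omega

lemma column_inj {a b : ℕ} (h : column a = column b) : a = b := by
  by_contra hne
  have h2 := congrFun (congrArg Partition.part h) (min a b)
  simp only [column] at h2
  rw [tto_part, tto_part] at h2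
  split_ifs at h2 <;> omega

/-- The 2-core of `2^j 1^{2n-2j}` (for `0 ≤ j ≤ n`) is empty, its
2-quotient is `(1^{n-j/2}, 1^{j/2})` for even `j` and `(1^{(j-1)/2}, 1^{n-(j-1)/2})` for
odd `j`, and `j ↦ (2-quotient)` is a bijection from `{0, …, n}` onto the set of
bipartitions of size `n` both of whose components are columns. -/
theorem two_one_quotient_bijection (n : ℕ) :
    (∀ j : ℕ, j ≤ n →
      HasECore 2 (threeTwoOne 0 j (2 * n - 2 * j)) emptyPartition ∧
      IsTwoQuotient (threeTwoOne 0 j (2 * n - 2 * j))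
        (if j % 2 = 0 then column (n - j / 2) else column ((j - 1) / 2))
        (if j % 2 = 0 then column (j / 2) else column (n - (j - 1) / 2))) ∧
    Set.BijOn
      (fun j : ℕ =>
        if j % 2 = 0 then (column (n - j / 2), column (j / 2))
        else (column ((j - 1) / 2), column (n - (j - 1) / 2)))
      (Set.Iic n)
      {bp : Partition × Partition | ∃ a b : ℕ, a + b = n ∧ bp = (column a, column b)} := by
  constructor
  · intro j hj
    exact ⟨core_lemma hj, quot_lemma hj⟩
  · refine ⟨?_, ?_, ?_⟩
    · intro j hj
      simp only [Set.mem_Iic] at hj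
      simp only [Set.mem_setOf_eq]
      by_cases h : j % 2 = 0
      · rw [if_pos h]
        exact ⟨n - j / 2, j / 2, by omega, rfl⟩
      · rw [if_neg h]
        exact ⟨(j - 1) / 2, n - (j - 1) / 2, by omega, rfl⟩
    · intro j hj j' hj' h
      simp only [Set.mem_Iic] at hj hj'
      dsimp only at h
      split_ifs at h with h1 h2 h2 <;>
      · rw [Prod.mk.injEq] at h
        obtain ⟨h3, h4⟩ := h
        have e3 := column_inj h3
        have e4 := column_inj h4
        omega
    · rintro bp ⟨a, b, hab, rfl⟩
      by_cases h : 2 * b ≤ n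
      · refine ⟨2 * b, Set.mem_Iic.mpr (by omega), ?_⟩
        have h1 : (2 * b) % 2 = 0 := by omega
        have h2 : (2 * b) / 2 = b := by omega
        have h3 : n - b = a := by omega
        dsimp only
        rw [if_pos h1, h2, h3]
      · refine ⟨2 * a + 1, Set.mem_Iic.mpr (by omega), ?_⟩
        have h1 : ¬ (2 * a + 1) % 2 = 0 := by omega
        have h2 : (2 * a + 1 - 1) / 2 = a := by omega
        have h3 : n - a = b := by omega
        dsimp only
        rw [if_neg h1, h2, h3]

end GUnBranching
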